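/- In a (C,S)-permutive closed set X ⊆ A^G, every finite pattern P is a φ(P)-spanning set: for every x ∈ X, the restriction x|_{φ(P)} is uniquely determined by x|_P, where φ(P) is the (C,S)-filling closure of P. -/

import Mathlib

open scoped symmDiff

/-- The left translate `gS` of a finite shape `S` in a group `G`. -/
def gset {G : Type*} [Group G] (g : G) (S : Finset G) : Set G :=
  (fun s => g * s) '' (S : Set G)

/-- A `(C,S)`-filling move: `P ⊊ Q`, some translate `gS` meets `P` in exactly
`|S| - 1` elements, and `Q = P ∪ gC`. -/
def FillMove {G : Type*} [Group G] (C S : Finset G) (P Q : Set G) : Prop :=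
  P ⊂ Q ∧ ∃ g : G, (P ∩ gset g S).ncard = S.card - 1 ∧ Q = P ∪ gset g C

/-- The `(C,S)`-filling closure: the union of all sets reachable from `P` by
finitely many filling moves. -/
def fillClosure {G : Type*} [Group G] (C S : Finset G) (P : Set G) : Set G :=
  {x | ∃ Q : Set G, Relation.ReflTransGen (FillMove C S) P Q ∧ x ∈ Q}


/-- `X` is `(C,S)`-permutive: for each `c ∈ C` and `g ∈ G` there is a local rule
computing the symbol at `g·c` from the symbols on `g·(S \\ {c})`. -/
def Permutive {G A : Type*} [Group G] (C S : Finset G) (X : Set (G → A)) : Prop :=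
  ∀ c ∈ C, ∀ g : G, ∃ f : ({s : G // s ∈ S ∧ s ≠ c} → A) → A,
    ∀ x ∈ X, f (fun s => x (g * s.1)) = x (g * c)

/-- In a `(C,S)`-permutive closed set `X`, every finite pattern `P` is
`φ(P)`-spanning: the restriction of any `x ∈ X` to the filling closure of `P` is
uniquely determined by its restriction to `P`. -/
theorem spanned_contains_fillClosure {G A : Type*} [Group G] [Fintype A]
    [TopologicalSpace A] [DiscreteTopology A]
    (C S : Finset G) (hCS : C ⊆ S) (X : Set (G → A)) (hX : IsClosed X)
    (hperm : Permutive C S X) (P : Finset G) :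
    ∀ x ∈ X, ∀ y ∈ X, (∀ p ∈ P, x p = y p) →
      ∀ q ∈ fillClosure C S (P : Set G), x q = y q := by
  intro x hx y hy hagree q hq
  obtain ⟨Q, hrt, hqQ⟩ := hq
  suffices h : ∀ p ∈ Q, x p = y p from h q hqQ
  clear hqQ
  induction hrt with
  | refl => intro p hp; exact hagree p hp
  | tail hab hbc ih =>
    rename_i Q1 Q2
    obtain ⟨_, g, hcard, rfl⟩ := hbc
    intro p hp
    rcases hp with hp | hp
    · exact ih p hp
    · obtain ⟨c, hc, rfl⟩ := hp
      by_cases hin : g * c ∈ Q1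
      · exact ih _ hin
      · have hcS : c ∈ S := hCS hc
        have hfin : (gset g S).Finite := S.finite_toSet.image _
        have hsub : Q1 ∩ gset g S ⊆ gset g S \ {g * c} := by
          rintro t ⟨ht1, ht2⟩
          exact ⟨ht2, by rintro rfl; exact hin ht1⟩
        have hcardS : (gset g S).ncard = S.card := by
          rw [gset, Set.ncard_image_of_injective _ (mul_right_injective g)]
          simp [Set.ncard_coe_finset]
        have hcard2 : (gset g S \ {g * c}).ncard = S.card - 1 := by
          rw [Set.ncard_diff_singleton_of_mem (show g * c ∈ gset g S from ⟨c, hcS, rfl⟩), hcardS]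
        have heq : Q1 ∩ gset g S = gset g S \ {g * c} :=
          Set.eq_of_subset_of_ncard_le hsub (by rw [hcard2, hcard]) (hfin.diff)
        have hmem : ∀ s ∈ S, s ≠ c → g * s ∈ Q1 := by
          intro s hs hsc
          have hm : g * s ∈ gset g S \ {g * c} :=
            ⟨⟨s, hs, rfl⟩, by
              simp only [Set.mem_singleton_iff]
              exact fun h => hsc (mul_left_cancel h)⟩
          rw [← heq] at hm
          exact hm.1
        obtain ⟨f, hf⟩ := hperm c hc g
        rw [← hf x hx, ← hf y hy]
        congr 1
        funext s
        exact ih _ (hmem s.1 s.2.1 s.2.2)
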